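/- arXiv:2007.15137 — 2 statements merged into one kernel-verified Lean document; each statement's English description precedes it below -/
import Mathlib

section
/- (Lemma 1 of the paper.) Let (ε_i)_{i≥1} be i.i.d. real random variables and let (X_i)_{i≥1} ⊂ ℝ^p be deterministic vectors satisfying assumption (A1): ‖X_i‖₂ ≤ C₀ for all i. For m, k ≥ 1 and u ∈ ℝ^p define the random vectors R_i(u) := (g_τ(ε_i − m^{−1/2}·X_iᵀu) − g_τ(ε_i))·X_i and r_{m,k}(u) := Σ_{i=m+1}^{m+k} R_i(u) (for each sample point, u ↦ r_{m,k}(u) is continuous, so the supremum below is a measurable random variable). Then for any constants C₁ > 0 and C₂ > 0 there exists a constant C₃ > 0 such that, for all sufficiently large k and m: ℙ[ sup_{‖u‖₂ ≤ C₁} ‖r_{m,k}(u) − E[r_{m,k}(u)]‖₁ ≥ √2·C₂·C₃·p·m^{−1/2}·k^{1/2}·(log k)^{1/2} ] ≤ 2·k^{−C₂²}. -/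
open MeasureTheory ProbabilityTheory
open scoped ProbabilityTheory

/-- `g_τ(x) = 2τx·1_{x≥0} + 2(1−τ)x·1_{x<0}`. -/
noncomputable def gFun (τ x : ℝ) : ℝ := if 0 ≤ x then 2 * τ * x else 2 * (1 - τ) * x

/-- Euclidean (`ℓ²`) norm on `ℝ^p`. -/
noncomputable def norm2 {p : ℕ} (v : Fin p → ℝ) : ℝ := Real.sqrt (∑ j, v j ^ 2)

/-- Scalar product `Xᵀu` on `ℝ^p`. -/
def dotp {p : ℕ} (v w : Fin p → ℝ) : ℝ := ∑ j, v j * w j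

/-- The `j`-th coordinate of `r_{m,k}(u) = Σ_{i=m+1}^{m+k} R_i(u)`, where
`R_i(u) = (g_τ(ε_i − m^{−1/2} X_iᵀu) − g_τ(ε_i))·X_i`. -/
noncomputable def rProc {Ω : Type*} {p : ℕ} (τ : ℝ) (X : ℕ → Fin p → ℝ) (ε : ℕ → Ω → ℝ)
    (m k : ℕ) (u : Fin p → ℝ) (j : Fin p) (ω : Ω) : ℝ :=
  ∑ i ∈ Finset.Icc (m + 1) (m + k),
    (gFun τ (ε i ω - (Real.sqrt m)⁻¹ * dotp (X i) u) - gFun τ (ε i ω)) * X i j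

lemma gFun_eq (τ x : ℝ) : gFun τ x = 2 * τ * max x 0 + 2 * (1 - τ) * min x 0 := by
  unfold gFun
  rcases le_or_gt 0 x with h | h
  · rw [if_pos h, max_eq_left h, min_eq_right h]; ring
  · rw [if_neg (not_le.2 h), max_eq_right h.le, min_eq_left h.le]; ring

lemma gFun_lipschitz {τ : ℝ} (h0 : 0 < τ) (h1 : τ < 1) (a b : ℝ) :
    |gFun τ a - gFun τ b| ≤ 2 * |a - b| := by
  rw [gFun_eq, gFun_eq]
  have hmax : |max a 0 - max b 0| ≤ |a - b| := abs_max_sub_max_le_abs a b 0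
  have hmin : |min a 0 - min b 0| ≤ |a - b| := by
    have : ∀ x : ℝ, min x 0 = -max (-x) 0 := by
      intro x
      rcases le_or_gt 0 x with h | h
      · rw [min_eq_right h, max_eq_right (by linarith : -x ≤ 0), neg_zero]
      · rw [min_eq_left h.le, max_eq_left (by linarith : (0:ℝ) ≤ -x), neg_neg]
    rw [this, this]
    have := abs_max_sub_max_le_abs (-a) (-b) 0
    calc |-max (-a) 0 - -max (-b) 0| = |max (-a) 0 - max (-b) 0| := by rw [← abs_neg]; ring_nf
    _ ≤ |-a - -b| := this
    _ = |a - b| := by rw [← abs_neg]; ring_nf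
  calc |2 * τ * max a 0 + 2 * (1 - τ) * min a 0 - (2 * τ * max b 0 + 2 * (1 - τ) * min b 0)|
      = |2 * τ * (max a 0 - max b 0) + 2 * (1 - τ) * (min a 0 - min b 0)| := by ring_nf
    _ ≤ |2 * τ * (max a 0 - max b 0)| + |2 * (1 - τ) * (min a 0 - min b 0)| := abs_add_le _ _
    _ = 2 * τ * |max a 0 - max b 0| + 2 * (1 - τ) * |min a 0 - min b 0| := by
        rw [abs_mul (2 * τ), abs_mul (2 * (1 - τ)), abs_of_nonneg (by linarith : (0:ℝ) ≤ 2 * τ),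
          abs_of_nonneg (by linarith : (0:ℝ) ≤ 2 * (1 - τ))]
    _ ≤ 2 * τ * |a - b| + 2 * (1 - τ) * |a - b| := by
        gcongr <;> linarith
    _ = 2 * |a - b| := by ring

lemma gFun_measurable (τ : ℝ) : Measurable (gFun τ) := by
  unfold gFun
  exact Measurable.ite measurableSet_Ici (by fun_prop) (by fun_prop)

lemma norm2_nonneg {p : ℕ} (v : Fin p → ℝ) : 0 ≤ norm2 v := Real.sqrt_nonneg _

lemma abs_dotp_le {p : ℕ} (v w : Fin p → ℝ) : |dotp v w| ≤ norm2 v * norm2 w := by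
  have h := Finset.sum_mul_sq_le_sq_mul_sq Finset.univ v w
  calc |dotp v w| = Real.sqrt ((dotp v w) ^ 2) := (Real.sqrt_sq_eq_abs _).symm
    _ ≤ Real.sqrt ((∑ j, v j ^ 2) * (∑ j, w j ^ 2)) := Real.sqrt_le_sqrt h
    _ = norm2 v * norm2 w := Real.sqrt_mul (by positivity) _

lemma abs_coord_le_norm2 {p : ℕ} (v : Fin p → ℝ) (j : Fin p) : |v j| ≤ norm2 v := by
  rw [norm2, ← Real.sqrt_sq_eq_abs]
  apply Real.sqrt_le_sqrt
  exact Finset.single_le_sum (f := fun j => v j ^ 2) (fun i _ => sq_nonneg _) (Finset.mem_univ j)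

lemma my_exp_le_one_add_sq {x : ℝ} (hx : |x| ≤ 1) : Real.exp x ≤ 1 + x + x ^ 2 := by
  have h := Real.exp_bound hx (n := 2) (by norm_num)
  norm_num [Nat.factorial, Finset.sum_range_succ] at h
  cases' abs_le.1 h with h4 h5
  nlinarith [sq_nonneg x, sq_abs x]


lemma integrable_of_abs_le {Ω : Type*} [MeasureSpace Ω] [IsProbabilityMeasure (ℙ : Measure Ω)]
    {Y : Ω → ℝ} {b : ℝ} (hY : AEStronglyMeasurable Y ℙ) (hb : ∀ ω, |Y ω| ≤ b) :
    Integrable Y ℙ :=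
  Integrable.mono' (integrable_const b) hY (ae_of_all _ fun ω => by
    simpa [Real.norm_eq_abs] using hb ω)

lemma mgf_le_of_bounded {Ω : Type*} [MeasureSpace Ω] [IsProbabilityMeasure (ℙ : Measure Ω)]
    {Y : Ω → ℝ} {b s : ℝ} (hY : Measurable Y) (hb0 : 0 ≤ b) (hb : ∀ ω, |Y ω| ≤ b)
    (hmean : ∫ ω, Y ω = 0) (hs : 0 ≤ s) (hsb : s * b ≤ 1) :
    mgf Y ℙ s ≤ Real.exp (s ^ 2 * b ^ 2) := by
  have hYint : Integrable Y ℙ := integrable_of_abs_le hY.aestronglyMeasurable hb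
  have hY2int : Integrable (fun ω => Y ω ^ 2) ℙ :=
    integrable_of_abs_le (hY.pow_const 2).aestronglyMeasurable (b := b ^ 2) (fun ω => by
      rw [abs_pow]
      exact pow_le_pow_left₀ (abs_nonneg _) (hb ω) 2)
  have hexpint : Integrable (fun ω => Real.exp (s * Y ω)) ℙ :=
    integrable_of_abs_le ((hY.const_mul s).exp).aestronglyMeasurable (b := Real.exp (s * b)) (fun ω => by
      rw [abs_of_nonneg (Real.exp_pos _).le]
      apply Real.exp_le_exp.2
      calc s * Y ω ≤ s * |Y ω| := by nlinarith [le_abs_self (Y ω)]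
        _ ≤ s * b := by nlinarith [(hb ω), abs_nonneg (Y ω)])
  have hpt : ∀ ω, Real.exp (s * Y ω) ≤ 1 + s * Y ω + s ^ 2 * Y ω ^ 2 := by
    intro ω
    have h1 : |s * Y ω| ≤ 1 := by
      rw [abs_mul, abs_of_nonneg hs]
      calc s * |Y ω| ≤ s * b := by nlinarith [hb ω, abs_nonneg (Y ω)]
        _ ≤ 1 := hsb
    have := my_exp_le_one_add_sq h1
    calc Real.exp (s * Y ω) ≤ 1 + s * Y ω + (s * Y ω) ^ 2 := this
      _ = 1 + s * Y ω + s ^ 2 * Y ω ^ 2 := by ring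
  have hint2 : Integrable (fun ω => 1 + s * Y ω + s ^ 2 * Y ω ^ 2) ℙ := by
    apply Integrable.add
    apply Integrable.add (integrable_const 1) (hYint.const_mul s)
    exact hY2int.const_mul (s ^ 2)
  calc mgf Y ℙ s = ∫ ω, Real.exp (s * Y ω) ∂ℙ := rfl
    _ ≤ ∫ ω, (1 + s * Y ω + s ^ 2 * Y ω ^ 2) ∂ℙ := integral_mono hexpint hint2 hpt
    _ = 1 + s * (∫ ω, Y ω) + s ^ 2 * ∫ ω, Y ω ^ 2 := by
        rw [integral_add (by exact (integrable_const 1).add (hYint.const_mul s)) (hY2int.const_mul (s ^ 2)),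
          integral_add (integrable_const 1) (hYint.const_mul s),
          integral_const, integral_const_mul, integral_const_mul]
        simp
    _ ≤ 1 + s ^ 2 * b ^ 2 := by
        rw [hmean, mul_zero, add_zero]
        have : ∫ ω, Y ω ^ 2 ≤ b ^ 2 := by
          calc ∫ ω, Y ω ^ 2 ∂ℙ ≤ ∫ _, b ^ 2 ∂ℙ := integral_mono hY2int (integrable_const _)
                (fun ω => by nlinarith [hb ω, abs_nonneg (Y ω), sq_abs (Y ω)])
            _ = b ^ 2 := by simp
        nlinarith [sq_nonneg s]
    _ ≤ Real.exp (s ^ 2 * b ^ 2) := by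
        have := Real.add_one_le_exp (s ^ 2 * b ^ 2)
        linarith

lemma chernoff_sum {Ω : Type*} [MeasureSpace Ω] [IsProbabilityMeasure (ℙ : Measure Ω)]
    {Y : ℕ → Ω → ℝ} (hind : iIndepFun Y ℙ)
    (hY : ∀ i, Measurable (Y i)) {s : Finset ℕ} {b t : ℝ} (hb : 0 < b)
    (hbd : ∀ i ∈ s, ∀ ω, |Y i ω| ≤ b) (hmean : ∀ i ∈ s, ∫ ω, Y i ω = 0)
    (ht : 0 ≤ t) (htb : t ≤ 2 * s.card * b) :
    ℙ {ω | t ≤ ∑ i ∈ s, Y i ω} ≤ ENNReal.ofReal (Real.exp (-t ^ 2 / (4 * s.card * b ^ 2))) := by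
  rcases Finset.eq_empty_or_nonempty s with rfl | hs
  · simp only [Finset.card_empty, Nat.cast_zero, mul_zero, zero_mul, div_zero, Real.exp_zero,
      ENNReal.ofReal_one]
    have : t = 0 := le_antisymm (by simpa using htb) ht
    exact le_trans (measure_mono (Set.subset_univ _)) (by simp)
  have hn : (1 : ℝ) ≤ s.card := by exact_mod_cast Nat.one_le_iff_ne_zero.2 hs.card_ne_zero.symm.symm
  have hnpos : (0 : ℝ) < s.card := by linarith
  set n : ℝ := (s.card : ℝ) with hn_def
  set σ : ℝ := t / (2 * n * b ^ 2) with hσ_def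
  have hσ : 0 ≤ σ := div_nonneg ht (by positivity)
  have hσb : σ * b ≤ 1 := by
    rw [hσ_def, div_mul_eq_mul_div, div_le_one (by positivity)]
    calc t * b ≤ 2 * n * b * b := by nlinarith
      _ = 2 * n * b ^ 2 := by ring
  -- S is bounded by n * b
  have hSbd : ∀ ω, |∑ i ∈ s, Y i ω| ≤ n * b := by
    intro ω
    calc |∑ i ∈ s, Y i ω| ≤ ∑ i ∈ s, |Y i ω| := Finset.abs_sum_le_sum_abs _ _
      _ ≤ ∑ i ∈ s, b := Finset.sum_le_sum (fun i hi => hbd i hi ω)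
      _ = n * b := by rw [Finset.sum_const, nsmul_eq_mul]
  have hSmeas : Measurable (fun ω => ∑ i ∈ s, Y i ω) := Finset.measurable_sum s (fun i _ => hY i)
  have hexpint : Integrable (fun ω => Real.exp (σ * (∑ i ∈ s, Y i) ω)) ℙ := by
    simp only [Finset.sum_apply]
    apply integrable_of_abs_le ((hSmeas.const_mul σ).exp).aestronglyMeasurable
      (b := Real.exp (σ * (n * b)))
    intro ω
    rw [abs_of_nonneg (Real.exp_pos _).le, Real.exp_le_exp]
    have h1 : ∑ i ∈ s, Y i ω ≤ n * b := (abs_le.1 (hSbd ω)).2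
    nlinarith
  have hcher := measure_ge_le_exp_mul_mgf (X := ∑ i ∈ s, Y i) (μ := ℙ) t hσ hexpint
  have hmgf : mgf (∑ i ∈ s, Y i) ℙ σ ≤ Real.exp (n * (σ ^ 2 * b ^ 2)) := by
    rw [hind.mgf_sum hY s]
    calc ∏ i ∈ s, mgf (Y i) ℙ σ ≤ ∏ i ∈ s, Real.exp (σ ^ 2 * b ^ 2) := by
          apply Finset.prod_le_prod (fun i _ => mgf_nonneg)
          intro i hi
          exact mgf_le_of_bounded (hY i) hb.le (hbd i hi) (hmean i hi) hσ hσb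
      _ = Real.exp (n * (σ ^ 2 * b ^ 2)) := by
          rw [Finset.prod_const, ← Real.exp_nat_mul]
  have hfinal : Real.exp (-σ * t) * mgf (∑ i ∈ s, Y i) ℙ σ
      ≤ Real.exp (-t ^ 2 / (4 * n * b ^ 2)) := by
    calc Real.exp (-σ * t) * mgf (∑ i ∈ s, Y i) ℙ σ
        ≤ Real.exp (-σ * t) * Real.exp (n * (σ ^ 2 * b ^ 2)) := by
          apply mul_le_mul_of_nonneg_left hmgf (Real.exp_pos _).le
      _ = Real.exp (-σ * t + n * (σ ^ 2 * b ^ 2)) := (Real.exp_add _ _).symm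
      _ = Real.exp (-t ^ 2 / (4 * n * b ^ 2)) := by
          congr 1
          rw [hσ_def]
          field_simp
          ring
  rw [ENNReal.le_ofReal_iff_toReal_le (measure_ne_top _ _) (Real.exp_pos _).le]
  have : {ω | t ≤ ∑ i ∈ s, Y i ω} = {ω | t ≤ (∑ i ∈ s, Y i) ω} := by
    ext ω; simp [Finset.sum_apply]
  rw [this]
  exact le_trans hcher hfinal

lemma chernoff_sum_abs {Ω : Type*} [MeasureSpace Ω] [IsProbabilityMeasure (ℙ : Measure Ω)]
    {Y : ℕ → Ω → ℝ} (hind : iIndepFun Y ℙ)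
    (hY : ∀ i, Measurable (Y i)) {s : Finset ℕ} {b t : ℝ} (hb : 0 < b)
    (hbd : ∀ i ∈ s, ∀ ω, |Y i ω| ≤ b) (hmean : ∀ i ∈ s, ∫ ω, Y i ω = 0)
    (ht : 0 ≤ t) (htb : t ≤ 2 * s.card * b) :
    ℙ {ω | t ≤ |∑ i ∈ s, Y i ω|}
      ≤ ENNReal.ofReal (2 * Real.exp (-t ^ 2 / (4 * s.card * b ^ 2))) := by
  have hneg : iIndepFun (fun i => (fun x : ℝ => -x) ∘ Y i) ℙ :=
    hind.comp _ (fun _ => measurable_neg)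
  have h1 := chernoff_sum hind hY hb hbd hmean ht htb
  have h2 := chernoff_sum hneg (fun i => (hY i).neg) hb
    (fun i hi ω => by simpa using hbd i hi ω)
    (fun i hi => by
      simp only [Function.comp_apply, integral_neg]
      rw [hmean i hi, neg_zero]) ht htb
  have hsub : {ω | t ≤ |∑ i ∈ s, Y i ω|} ⊆
      {ω | t ≤ ∑ i ∈ s, Y i ω} ∪ {ω | t ≤ ∑ i ∈ s, ((fun x : ℝ => -x) ∘ Y i) ω} := by
    intro ω hω
    simp only [Set.mem_setOf_eq] at hω
    rcases le_abs.1 hω with h | h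
    · exact Or.inl h
    · right
      simp only [Set.mem_setOf_eq, Function.comp_apply, ← Finset.sum_neg_distrib]
      exact h.trans_eq (by rw [← Finset.sum_neg_distrib])
  calc ℙ {ω | t ≤ |∑ i ∈ s, Y i ω|} ≤ _ := measure_mono hsub
    _ ≤ ℙ {ω | t ≤ ∑ i ∈ s, Y i ω} + ℙ {ω | t ≤ ∑ i ∈ s, ((fun x : ℝ => -x) ∘ Y i) ω} :=
        measure_union_le _ _
    _ ≤ ENNReal.ofReal (Real.exp (-t ^ 2 / (4 * s.card * b ^ 2)))
        + ENNReal.ofReal (Real.exp (-t ^ 2 / (4 * s.card * b ^ 2))) := add_le_add h1 h2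
    _ = ENNReal.ofReal (2 * Real.exp (-t ^ 2 / (4 * s.card * b ^ 2))) := by
        rw [← ENNReal.ofReal_add (Real.exp_pos _).le (Real.exp_pos _).le]
        congr 1; ring


lemma norm2_le_coords {p : ℕ} {u : Fin p → ℝ} {h : ℝ} (hh : 0 ≤ h) (hc : ∀ j, |u j| ≤ h) :
    norm2 u ≤ Real.sqrt p * h := by
  rw [norm2]
  calc Real.sqrt (∑ j, u j ^ 2) ≤ Real.sqrt (∑ _j : Fin p, h ^ 2) := by
        apply Real.sqrt_le_sqrt
        apply Finset.sum_le_sum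
        intro j _
        calc u j ^ 2 = |u j| ^ 2 := (sq_abs _).symm
          _ ≤ h ^ 2 := pow_le_pow_left₀ (abs_nonneg _) (hc j) 2
    _ = Real.sqrt ((p : ℝ) * h ^ 2) := by
        rw [Finset.sum_const, Finset.card_univ, Fintype.card_fin, nsmul_eq_mul]
    _ = Real.sqrt p * h := by
        rw [Real.sqrt_mul (Nat.cast_nonneg p), Real.sqrt_sq hh]

lemma grid_approx (p : ℕ) {k : ℕ} (hk : 1 ≤ k) {C₁ : ℝ} (hC₁ : 0 < C₁) :
    ∃ G : Finset (Fin p → ℝ), G.Nonempty ∧ G.card ≤ (k + 1) ^ p ∧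
      (∀ v ∈ G, ∀ j, |v j| ≤ C₁) ∧
      ∀ u : Fin p → ℝ, (∀ j, |u j| ≤ C₁) → ∃ v ∈ G, ∀ j, |u j - v j| ≤ 2 * C₁ / k := by
  classical
  have hk' : (0:ℝ) < k := by exact_mod_cast hk
  set f : ℕ → ℝ := fun a => -C₁ + 2 * C₁ * a / k with hf_def
  set G : Finset (Fin p → ℝ) :=
    Fintype.piFinset (fun _ : Fin p => (Finset.range (k + 1)).image f) with hG_def
  refine ⟨G, ?_, ?_, ?_, ?_⟩
  · apply Fintype.piFinset_nonempty.2
    intro j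
    exact ⟨f 0, Finset.mem_image_of_mem f (Finset.mem_range.2 (Nat.succ_pos k))⟩
  · rw [hG_def, Fintype.card_piFinset]
    calc ∏ _j : Fin p, ((Finset.range (k + 1)).image f).card
        ≤ ∏ _j : Fin p, (k + 1) := by
          apply Finset.prod_le_prod (fun _ _ => Nat.zero_le _)
          intro j _
          exact le_trans (Finset.card_image_le) (by rw [Finset.card_range])
      _ = (k + 1) ^ p := by rw [Finset.prod_const, Finset.card_univ, Fintype.card_fin]
  · intro v hv j
    rw [hG_def, Fintype.mem_piFinset] at hv
    obtain ⟨a, ha, hfa⟩ := Finset.mem_image.1 (hv j)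
    rw [Finset.mem_range, Nat.lt_succ_iff] at ha
    have ha' : (a : ℝ) ≤ k := by exact_mod_cast ha
    rw [← hfa, hf_def]
    simp only
    rw [abs_le]
    constructor
    · have : (0:ℝ) ≤ 2 * C₁ * a / k := by positivity
      linarith
    · have : 2 * C₁ * a / k ≤ 2 * C₁ := by
        rw [div_le_iff₀ hk']
        nlinarith
      linarith
  · intro u hu
    set a : Fin p → ℕ := fun j => ⌊(u j + C₁) * k / (2 * C₁)⌋₊ with ha_def
    have hC₁2 : (0:ℝ) < 2 * C₁ := by linarith
    have hx0 : ∀ j, 0 ≤ (u j + C₁) * k / (2 * C₁) := by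
      intro j
      have h := (abs_le.1 (hu j)).1
      have : 0 ≤ u j + C₁ := by linarith
      positivity
    have hfl : ∀ j, (a j : ℝ) ≤ (u j + C₁) * k / (2 * C₁) := fun j => Nat.floor_le (hx0 j)
    have hfu : ∀ j, (u j + C₁) * k / (2 * C₁) < a j + 1 := fun j => Nat.lt_floor_add_one _
    have hak : ∀ j, a j ≤ k := by
      intro j
      have hxk : (u j + C₁) * k / (2 * C₁) ≤ k := by
        rw [div_le_iff₀ hC₁2]
        have h := (abs_le.1 (hu j)).2
        nlinarith
      have h := Nat.floor_le_floor (R := ℝ) hxk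
      rw [Nat.floor_natCast] at h
      exact h
    refine ⟨fun j => f (a j), ?_, ?_⟩
    · rw [hG_def, Fintype.mem_piFinset]
      intro j
      exact Finset.mem_image_of_mem f (Finset.mem_range.2 (Nat.lt_succ_of_le (hak j)))
    · intro j
      have h1 : 2 * C₁ * (a j : ℝ) ≤ (u j + C₁) * k := by
        have := hfl j
        rw [le_div_iff₀ hC₁2] at this
        linarith
      have h2 : (u j + C₁) * k < ((a j : ℝ) + 1) * (2 * C₁) := by
        have := hfu j
        rw [div_lt_iff₀ hC₁2] at this
        linarith
      have heq : u j - f (a j) = u j + C₁ - 2 * C₁ * (a j : ℝ) / k := by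
        rw [hf_def]; ring
      rw [heq, abs_le]
      constructor
      · have hlow : 2 * C₁ * (a j : ℝ) / k ≤ u j + C₁ := by
          rw [div_le_iff₀ hk']
          nlinarith
        have : (0:ℝ) ≤ 2 * C₁ / k := by positivity
        linarith
      · rw [sub_le_iff_le_add, ← add_div, le_div_iff₀ hk']
        nlinarith

lemma log_nat_le_two_sqrt {k : ℕ} (hk : 1 ≤ k) : Real.log k ≤ 2 * Real.sqrt k := by
  have hk' : (0:ℝ) < k := by exact_mod_cast hk
  have h1 : Real.log (Real.sqrt k) ≤ Real.sqrt k - 1 :=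
    Real.log_le_sub_one_of_pos (Real.sqrt_pos.2 hk')
  have h2 : Real.log k = 2 * Real.log (Real.sqrt k) := by
    rw [Real.log_sqrt hk'.le]; ring
  linarith [Real.sqrt_nonneg (k:ℝ)]

lemma exists_nat_sqrt_ge (c : ℝ) : ∃ K : ℕ, ∀ k : ℕ, K ≤ k → c ≤ Real.sqrt k := by
  refine ⟨⌈c ^ 2⌉₊, fun k hk => ?_⟩
  rcases le_or_gt c 0 with hc | hc
  · exact hc.trans (Real.sqrt_nonneg _)
  · have h1 : c ^ 2 ≤ k := le_trans (Nat.le_ceil _) (by exact_mod_cast hk)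
    exact Real.le_sqrt_of_sq_le h1

lemma exists_nat_sqrt_sqrt_ge (c : ℝ) : ∃ K : ℕ, ∀ k : ℕ, K ≤ k →
    c ≤ Real.sqrt (Real.sqrt k) := by
  obtain ⟨K, hK⟩ := exists_nat_sqrt_ge (c ^ 2)
  refine ⟨K, fun k hk => ?_⟩
  rcases le_or_gt c 0 with hc | hc
  · exact hc.trans (Real.sqrt_nonneg _)
  · exact Real.le_sqrt_of_sq_le (hK k hk)

lemma gridCount_le {p k : ℕ} (hp : 1 ≤ p) (hk2 : 2 ≤ k) (hkp : p ≤ k) :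
    (k + 1) ^ p * p ≤ k ^ (2 * p + 2) := by
  have h1 : k + 1 ≤ k ^ 2 := by nlinarith
  have h2 : (k + 1) ^ p ≤ (k ^ 2) ^ p := Nat.pow_le_pow_left h1 p
  have h3 : p ≤ k ^ 2 := le_trans hkp (by nlinarith)
  calc (k + 1) ^ p * p ≤ (k ^ 2) ^ p * k ^ 2 := Nat.mul_le_mul h2 h3
    _ = k ^ (2 * p + 2) := by rw [← pow_mul, ← pow_add, mul_comm 2 p]


/-- The per-summand function of `rProc` as a function of the error value. -/
noncomputable def phiF {p : ℕ} (τ : ℝ) (X : ℕ → Fin p → ℝ) (m : ℕ) (u : Fin p → ℝ)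
    (j : Fin p) (i : ℕ) (x : ℝ) : ℝ :=
  (gFun τ (x - (Real.sqrt m)⁻¹ * dotp (X i) u) - gFun τ x) * X i j

lemma phiF_measurable {p : ℕ} (τ : ℝ) (X : ℕ → Fin p → ℝ) (m : ℕ) (u : Fin p → ℝ)
    (j : Fin p) (i : ℕ) : Measurable (phiF τ X m u j i) := by
  unfold phiF
  exact (((gFun_measurable τ).comp (measurable_id.sub_const _)).sub
    (gFun_measurable τ)).mul_const _

lemma phiF_bound {p : ℕ} {τ : ℝ} (h0 : 0 < τ) (h1 : τ < 1) {X : ℕ → Fin p → ℝ} {C₀ : ℝ}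
    (hX : ∀ i, norm2 (X i) ≤ C₀) (m : ℕ) (u : Fin p → ℝ) (j : Fin p) (i : ℕ) (x : ℝ) :
    |phiF τ X m u j i x| ≤ 2 * (Real.sqrt m)⁻¹ * C₀ ^ 2 * norm2 u := by
  have hC₀ : 0 ≤ C₀ := le_trans (norm2_nonneg (X i)) (hX i)
  have hg : |gFun τ (x - (Real.sqrt m)⁻¹ * dotp (X i) u) - gFun τ x|
      ≤ 2 * ((Real.sqrt m)⁻¹ * (C₀ * norm2 u)) := by
    calc |gFun τ (x - (Real.sqrt m)⁻¹ * dotp (X i) u) - gFun τ x|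
        ≤ 2 * |x - (Real.sqrt m)⁻¹ * dotp (X i) u - x| := gFun_lipschitz h0 h1 _ _
      _ = 2 * ((Real.sqrt m)⁻¹ * |dotp (X i) u|) := by
          rw [show x - (Real.sqrt m)⁻¹ * dotp (X i) u - x = -((Real.sqrt m)⁻¹ * dotp (X i) u) by
            ring, abs_neg, abs_mul, abs_of_nonneg (by positivity : (0:ℝ) ≤ (Real.sqrt m)⁻¹)]
      _ ≤ 2 * ((Real.sqrt m)⁻¹ * (C₀ * norm2 u)) := by
          gcongr
          exact le_trans (abs_dotp_le _ _) (by gcongr; exacts [norm2_nonneg u, hX i])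
  have hXij : |X i j| ≤ C₀ := le_trans (abs_coord_le_norm2 _ _) (hX i)
  calc |phiF τ X m u j i x|
      = |gFun τ (x - (Real.sqrt m)⁻¹ * dotp (X i) u) - gFun τ x| * |X i j| := abs_mul _ _
    _ ≤ 2 * ((Real.sqrt m)⁻¹ * (C₀ * norm2 u)) * C₀ :=
        mul_le_mul hg hXij (abs_nonneg _) (by have := norm2_nonneg u; positivity)
    _ = 2 * (Real.sqrt m)⁻¹ * C₀ ^ 2 * norm2 u := by ring

lemma phiF_lipschitz {p : ℕ} {τ : ℝ} (h0 : 0 < τ) (h1 : τ < 1) {X : ℕ → Fin p → ℝ} {C₀ : ℝ}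
    (hX : ∀ i, norm2 (X i) ≤ C₀) (m : ℕ) (u v : Fin p → ℝ) (j : Fin p) (i : ℕ) (x : ℝ) :
    |phiF τ X m u j i x - phiF τ X m v j i x|
      ≤ 2 * (Real.sqrt m)⁻¹ * C₀ ^ 2 * norm2 (fun l => u l - v l) := by
  have hC₀ : 0 ≤ C₀ := le_trans (norm2_nonneg (X i)) (hX i)
  have hXij : |X i j| ≤ C₀ := le_trans (abs_coord_le_norm2 _ _) (hX i)
  have hdot : dotp (X i) u - dotp (X i) v = dotp (X i) (fun l => u l - v l) := by
    simp only [dotp, ← Finset.sum_sub_distrib, mul_sub]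
  calc |phiF τ X m u j i x - phiF τ X m v j i x|
      = |gFun τ (x - (Real.sqrt m)⁻¹ * dotp (X i) u)
          - gFun τ (x - (Real.sqrt m)⁻¹ * dotp (X i) v)| * |X i j| := by
        rw [← abs_mul]; unfold phiF; congr 1; ring
    _ ≤ 2 * |x - (Real.sqrt m)⁻¹ * dotp (X i) u - (x - (Real.sqrt m)⁻¹ * dotp (X i) v)| * C₀ :=
        mul_le_mul (gFun_lipschitz h0 h1 _ _) hXij (abs_nonneg _) (by positivity)
    _ = 2 * ((Real.sqrt m)⁻¹ * |dotp (X i) (fun l => u l - v l)|) * C₀ := by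
        rw [show x - (Real.sqrt m)⁻¹ * dotp (X i) u - (x - (Real.sqrt m)⁻¹ * dotp (X i) v)
            = -((Real.sqrt m)⁻¹ * (dotp (X i) u - dotp (X i) v)) by ring, abs_neg, abs_mul,
          abs_of_nonneg (by positivity : (0:ℝ) ≤ (Real.sqrt m)⁻¹), hdot]
    _ ≤ 2 * ((Real.sqrt m)⁻¹ * (C₀ * norm2 (fun l => u l - v l))) * C₀ := by
        gcongr
        exact le_trans (abs_dotp_le _ _) (by gcongr; exacts [norm2_nonneg _, hX i])
    _ = 2 * (Real.sqrt m)⁻¹ * C₀ ^ 2 * norm2 (fun l => u l - v l) := by ring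

lemma rProc_eq_sum_phiF {Ω : Type*} {p : ℕ} (τ : ℝ) (X : ℕ → Fin p → ℝ) (ε : ℕ → Ω → ℝ)
    (m k : ℕ) (u : Fin p → ℝ) (j : Fin p) (ω : Ω) :
    rProc τ X ε m k u j ω = ∑ i ∈ Finset.Icc (m + 1) (m + k), phiF τ X m u j i (ε i ω) := rfl

lemma rProc_measurable {Ω : Type*} [MeasurableSpace Ω] {p : ℕ} (τ : ℝ) (X : ℕ → Fin p → ℝ)
    {ε : ℕ → Ω → ℝ} (hmeas : ∀ i, Measurable (ε i)) (m k : ℕ) (u : Fin p → ℝ) (j : Fin p) :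
    Measurable (rProc τ X ε m k u j) := by
  apply Finset.measurable_sum
  intro i _
  exact (phiF_measurable τ X m u j i).comp (hmeas i)

lemma integral_rProc {Ω : Type*} [MeasureSpace Ω] [IsProbabilityMeasure (ℙ : Measure Ω)]
    {p : ℕ} {τ : ℝ} (h0 : 0 < τ) (h1 : τ < 1) {X : ℕ → Fin p → ℝ} {C₀ : ℝ}
    (hX : ∀ i, norm2 (X i) ≤ C₀) {ε : ℕ → Ω → ℝ} (hmeas : ∀ i, Measurable (ε i))
    (m k : ℕ) (u : Fin p → ℝ) (j : Fin p) :
    ∫ ω, rProc τ X ε m k u j ω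
      = ∑ i ∈ Finset.Icc (m + 1) (m + k), ∫ ω, phiF τ X m u j i (ε i ω) := by
  simp only [rProc_eq_sum_phiF]
  exact integral_finset_sum _ (fun i _ => integrable_of_abs_le
    (((phiF_measurable τ X m u j i).comp (hmeas i)).aestronglyMeasurable)
    (fun ω => phiF_bound h0 h1 hX m u j i (ε i ω)))

lemma abs_integral_le_of_abs_le {Ω : Type*} [MeasureSpace Ω] [IsProbabilityMeasure (ℙ : Measure Ω)]
    {f : Ω → ℝ} {b : ℝ} (hf : ∀ ω, |f ω| ≤ b) : |∫ ω, f ω| ≤ b := by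
  have := norm_integral_le_of_norm_le_const (μ := (ℙ : Measure Ω)) (f := f)
    (C := b) (ae_of_all _ fun ω => by simpa [Real.norm_eq_abs] using hf ω)
  simpa [Real.norm_eq_abs] using this

lemma point_bound {Ω : Type*} [MeasureSpace Ω] [IsProbabilityMeasure (ℙ : Measure Ω)]
    {p : ℕ} {τ : ℝ} (h0 : 0 < τ) (h1 : τ < 1) {X : ℕ → Fin p → ℝ} {C₀ : ℝ} (hC₀ : 0 < C₀)
    (hX : ∀ i, norm2 (X i) ≤ C₀) {ε : ℕ → Ω → ℝ} (hmeas : ∀ i, Measurable (ε i))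
    (hindep : iIndepFun ε ℙ)
    {m : ℕ} (hm : 1 ≤ m) (k : ℕ) (u : Fin p → ℝ) (j : Fin p) {B t : ℝ} (hB : 0 < B)
    (hu : norm2 u ≤ B)
    (ht : 0 ≤ t) (htb : t ≤ 2 * k * (4 * (Real.sqrt m)⁻¹ * C₀ ^ 2 * B)) :
    ℙ {ω | t ≤ |rProc τ X ε m k u j ω - ∫ ω', rProc τ X ε m k u j ω'|}
      ≤ ENNReal.ofReal
          (2 * Real.exp (-t ^ 2 / (4 * k * (4 * (Real.sqrt m)⁻¹ * C₀ ^ 2 * B) ^ 2))) := by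
  classical
  have hsm : (0:ℝ) < Real.sqrt m := Real.sqrt_pos.2 (by exact_mod_cast hm)
  set b : ℝ := 4 * (Real.sqrt m)⁻¹ * C₀ ^ 2 * B with hb_def
  have hb : 0 < b := by positivity
  set c : ℕ → ℝ := fun i => ∫ ω, phiF τ X m u j i (ε i ω) with hc_def
  set Y : ℕ → Ω → ℝ := fun i ω => phiF τ X m u j i (ε i ω) - c i with hY_def
  have hYmeas : ∀ i, Measurable (Y i) :=
    fun i => ((phiF_measurable τ X m u j i).comp (hmeas i)).sub_const _
  have hYind : iIndepFun Y ℙ :=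
    hindep.comp (fun i => fun x => phiF τ X m u j i x - c i)
      (fun i => (phiF_measurable τ X m u j i).sub_const _)
  have hphi_b : ∀ i x, |phiF τ X m u j i x| ≤ 2 * (Real.sqrt m)⁻¹ * C₀ ^ 2 * B := by
    intro i x
    refine (phiF_bound h0 h1 hX m u j i x).trans ?_
    exact mul_le_mul_of_nonneg_left hu (by positivity)
  have hYbd : ∀ i ∈ Finset.Icc (m + 1) (m + k), ∀ ω, |Y i ω| ≤ b := by
    intro i _ ω
    have h1' := hphi_b i (ε i ω)
    have h2' : |c i| ≤ 2 * (Real.sqrt m)⁻¹ * C₀ ^ 2 * B :=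
      abs_integral_le_of_abs_le (fun ω' => hphi_b i (ε i ω'))
    show |phiF τ X m u j i (ε i ω) - c i| ≤ b
    calc |phiF τ X m u j i (ε i ω) - c i| = |phiF τ X m u j i (ε i ω) + -(c i)| := by rw [sub_eq_add_neg]
      _ ≤ |phiF τ X m u j i (ε i ω)| + |(-(c i))| := abs_add_le _ _
      _ = |phiF τ X m u j i (ε i ω)| + |c i| := by rw [abs_neg]
      _ ≤ b := by rw [hb_def]; linarith
  have hYmean : ∀ i ∈ Finset.Icc (m + 1) (m + k), ∫ ω, Y i ω = 0 := by
    intro i _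
    have hint : Integrable (fun ω => phiF τ X m u j i (ε i ω)) ℙ :=
      integrable_of_abs_le (((phiF_measurable τ X m u j i).comp (hmeas i)).aestronglyMeasurable)
        (fun ω => hphi_b i (ε i ω))
    rw [hY_def]
    simp only
    rw [integral_sub hint (integrable_const _), integral_const]
    simp [hc_def]
  have hcard : (Finset.Icc (m + 1) (m + k)).card = k := by rw [Nat.card_Icc]; omega
  have key := chernoff_sum_abs hYind hYmeas hb hYbd hYmean ht (by rw [hcard]; exact htb)
  rw [hcard] at key
  have hev : {ω | t ≤ |rProc τ X ε m k u j ω - ∫ ω', rProc τ X ε m k u j ω'|}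
      = {ω | t ≤ |∑ i ∈ Finset.Icc (m + 1) (m + k), Y i ω|} := by
    ext ω
    simp only [Set.mem_setOf_eq]
    rw [rProc_eq_sum_phiF, integral_rProc h0 h1 hX hmeas, hY_def, ← Finset.sum_sub_distrib]
  rw [hev]
  exact key


lemma rProc_bound {Ω : Type*} {p : ℕ} {τ : ℝ} (h0 : 0 < τ) (h1 : τ < 1)
    {X : ℕ → Fin p → ℝ} {C₀ : ℝ} (hX : ∀ i, norm2 (X i) ≤ C₀) (ε : ℕ → Ω → ℝ)
    (m k : ℕ) (u : Fin p → ℝ) (j : Fin p) (ω : Ω) :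
    |rProc τ X ε m k u j ω| ≤ k * (2 * (Real.sqrt m)⁻¹ * C₀ ^ 2 * norm2 u) := by
  calc |rProc τ X ε m k u j ω|
      ≤ ∑ i ∈ Finset.Icc (m + 1) (m + k), |phiF τ X m u j i (ε i ω)| :=
        Finset.abs_sum_le_sum_abs _ _
    _ ≤ ∑ i ∈ Finset.Icc (m + 1) (m + k), 2 * (Real.sqrt m)⁻¹ * C₀ ^ 2 * norm2 u :=
        Finset.sum_le_sum (fun i _ => phiF_bound h0 h1 hX m u j i _)
    _ = k * (2 * (Real.sqrt m)⁻¹ * C₀ ^ 2 * norm2 u) := by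
        rw [Finset.sum_const, Nat.card_Icc, nsmul_eq_mul]
        congr 2
        omega

lemma rProc_lip {Ω : Type*} {p : ℕ} {τ : ℝ} (h0 : 0 < τ) (h1 : τ < 1)
    {X : ℕ → Fin p → ℝ} {C₀ : ℝ} (hX : ∀ i, norm2 (X i) ≤ C₀) (ε : ℕ → Ω → ℝ)
    (m k : ℕ) (u v : Fin p → ℝ) (j : Fin p) (ω : Ω) :
    |rProc τ X ε m k u j ω - rProc τ X ε m k v j ω|
      ≤ k * (2 * (Real.sqrt m)⁻¹ * C₀ ^ 2 * norm2 (fun l => u l - v l)) := by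
  have : rProc τ X ε m k u j ω - rProc τ X ε m k v j ω
      = ∑ i ∈ Finset.Icc (m + 1) (m + k), (phiF τ X m u j i (ε i ω) - phiF τ X m v j i (ε i ω)) := by
    show (∑ i ∈ Finset.Icc (m + 1) (m + k), phiF τ X m u j i (ε i ω))
        - (∑ i ∈ Finset.Icc (m + 1) (m + k), phiF τ X m v j i (ε i ω)) = _
    rw [← Finset.sum_sub_distrib]
  rw [this]
  calc |∑ i ∈ Finset.Icc (m + 1) (m + k), (phiF τ X m u j i (ε i ω) - phiF τ X m v j i (ε i ω))|
      ≤ ∑ i ∈ Finset.Icc (m + 1) (m + k), |phiF τ X m u j i (ε i ω) - phiF τ X m v j i (ε i ω)| :=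
        Finset.abs_sum_le_sum_abs _ _
    _ ≤ ∑ i ∈ Finset.Icc (m + 1) (m + k),
          2 * (Real.sqrt m)⁻¹ * C₀ ^ 2 * norm2 (fun l => u l - v l) :=
        Finset.sum_le_sum (fun i _ => phiF_lipschitz h0 h1 hX m u v j i _)
    _ = k * (2 * (Real.sqrt m)⁻¹ * C₀ ^ 2 * norm2 (fun l => u l - v l)) := by
        rw [Finset.sum_const, Nat.card_Icc, nsmul_eq_mul]
        congr 2
        omega


theorem stmt7 {Ω : Type*} [MeasureSpace Ω] [IsProbabilityMeasure (ℙ : Measure Ω)]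
    (τ : ℝ) (hτ : τ ∈ Set.Ioo (0 : ℝ) 1) (p : ℕ) (hp : 1 ≤ p)
    (C₀ : ℝ) (hC₀ : 0 < C₀)
    -- (A1): deterministic designs
    (X : ℕ → Fin p → ℝ) (hX : ∀ i, norm2 (X i) ≤ C₀)
    -- i.i.d. errors
    (ε : ℕ → Ω → ℝ) (hmeas : ∀ i, Measurable (ε i))
    (hindep : iIndepFun ε ℙ)
    (hident : ∀ i, Measure.map (ε i) ℙ = Measure.map (ε 0) ℙ)
    (C₁ C₂ : ℝ) (hC₁ : 0 < C₁) (hC₂ : 0 < C₂) :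
    ∃ C₃ > (0 : ℝ), ∃ K M : ℕ, ∀ k ≥ K, ∀ m ≥ M,
      ℙ {ω | Real.sqrt 2 * C₂ * C₃ * p * (Real.sqrt m)⁻¹ * Real.sqrt k
              * Real.sqrt (Real.log k)
            ≤ ⨆ u : {u : Fin p → ℝ // norm2 u ≤ C₁},
                ∑ j, |rProc τ X ε m k u.1 j ω - ∫ ω', rProc τ X ε m k u.1 j ω'|}
        ≤ ENNReal.ofReal (2 * (k : ℝ) ^ (-(C₂ ^ 2))) := by
  classical
  obtain ⟨hτ0, hτ1⟩ := hτ
  have hp' : (0:ℝ) < p := by exact_mod_cast hp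
  have hsp : (0:ℝ) < Real.sqrt p := Real.sqrt_pos.2 hp'
  set E : ℝ := C₂ ^ 2 + 2 * p + 2 with hE_def
  have hE : 0 < E := by rw [hE_def]; positivity
  have hprod : (0:ℝ) < 128 * p * E := by
    apply mul_pos (mul_pos (by norm_num) hp') hE
  set C₃ : ℝ := C₀ ^ 2 * C₁ * Real.sqrt (128 * p * E) / C₂ with hC₃_def
  have hC₃ : 0 < C₃ :=
    div_pos (mul_pos (mul_pos (pow_pos hC₀ 2) hC₁) (Real.sqrt_pos.2 hprod)) hC₂
  have hC₃sq : C₂ ^ 2 * C₃ ^ 2 = 128 * p * E * (C₀ ^ 2 * C₁) ^ 2 := by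
    rw [hC₃_def, div_pow, mul_pow (C₀ ^ 2 * C₁), Real.sq_sqrt hprod.le]
    field_simp
  clear_value E C₃
  obtain ⟨K₁, hK₁⟩ := exists_nat_sqrt_ge
    (32 * Real.sqrt p * C₀ ^ 2 * C₁ / (Real.sqrt 2 * C₂ * C₃))
  obtain ⟨K₂, hK₂⟩ := exists_nat_sqrt_sqrt_ge
    (2 * C₂ * C₃ / (16 * C₀ ^ 2 * C₁ * Real.sqrt p))
  refine ⟨C₃, hC₃, max (max 3 (max 2 p)) (max K₁ K₂), 1, ?_⟩
  intro k hk m hm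
  have hk3 : 3 ≤ k := le_trans (le_trans (le_max_left 3 _) (le_max_left _ _)) hk
  have hk1 : 1 ≤ k := by omega
  have hk2 : 2 ≤ k := by omega
  have hkp : p ≤ k := le_trans (le_trans (le_trans (le_max_right 2 p) (le_max_right 3 _))
    (le_max_left _ _)) hk
  have hkK₁ : K₁ ≤ k := le_trans (le_trans (le_max_left K₁ K₂) (le_max_right _ _)) hk
  have hkK₂ : K₂ ≤ k := le_trans (le_trans (le_max_right K₁ K₂) (le_max_right _ _)) hk
  have hm1 : 1 ≤ m := hm
  have hkR : (0:ℝ) < k := by exact_mod_cast hk1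
  have hmR : (0:ℝ) < m := by exact_mod_cast hm1
  have hsk : (0:ℝ) < Real.sqrt k := Real.sqrt_pos.2 hkR
  have hsm : (0:ℝ) < Real.sqrt m := Real.sqrt_pos.2 hmR
  have hs2 : (0:ℝ) < Real.sqrt 2 := Real.sqrt_pos.2 (by norm_num)
  have hlog1 : 1 ≤ Real.log k := by
    rw [Real.le_log_iff_exp_le hkR]
    have h1 : Real.exp 1 < 2.7182818286 := Real.exp_one_lt_d9
    have h2 : (3:ℝ) ≤ k := by exact_mod_cast hk3
    linarith
  have hslog : 1 ≤ Real.sqrt (Real.log k) := by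
    rw [show (1:ℝ) = Real.sqrt 1 by simp]
    exact Real.sqrt_le_sqrt hlog1
  have hslog0 : 0 < Real.sqrt (Real.log k) := lt_of_lt_of_le one_pos hslog
  set T : ℝ := Real.sqrt 2 * C₂ * C₃ * p * (Real.sqrt m)⁻¹ * Real.sqrt k
    * Real.sqrt (Real.log k) with hT_def
  have hT : 0 < T :=
    mul_pos (mul_pos (mul_pos (mul_pos (mul_pos (mul_pos hs2 hC₂) hC₃) hp')
      (inv_pos.2 hsm)) hsk) hslog0
  clear_value T
  obtain ⟨G, hGne, hGcard, hGmem, hGapx⟩ := grid_approx p hk1 hC₁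
  set B : ℝ := Real.sqrt p * C₁ with hB_def
  have hB : 0 < B := mul_pos hsp hC₁
  set b : ℝ := 4 * (Real.sqrt m)⁻¹ * C₀ ^ 2 * B with hb_def
  set t : ℝ := T / (2 * p) with ht_def
  have htpos : 0 < t := div_pos hT (by positivity)
  have ht0 : 0 ≤ t := le_of_lt htpos
  clear_value B b t
  haveI hfinne : Nonempty (Fin p) := ⟨⟨0, hp⟩⟩
  -- Lipschitz constant bound used for discretization
  have hincl : {ω | T ≤ ⨆ u : {u : Fin p → ℝ // norm2 u ≤ C₁},
      ∑ j, |rProc τ X ε m k u.1 j ω - ∫ ω', rProc τ X ε m k u.1 j ω'|}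
      ⊆ ⋃ v ∈ G, ⋃ j : Fin p,
        {ω | t ≤ |rProc τ X ε m k v j ω - ∫ ω', rProc τ X ε m k v j ω'|} := by
    intro ω hω
    simp only [Set.mem_setOf_eq] at hω
    have hzero : norm2 (0 : Fin p → ℝ) ≤ C₁ := by
      have h : norm2 (0 : Fin p → ℝ) = 0 := by simp [norm2]
      rw [h]; exact hC₁.le
    haveI hne : Nonempty {u : Fin p → ℝ // norm2 u ≤ C₁} := ⟨⟨0, hzero⟩⟩
    have hex : ∃ u : {u : Fin p → ℝ // norm2 u ≤ C₁},
        3 * T / 4 < ∑ j, |rProc τ X ε m k u.1 j ω - ∫ ω', rProc τ X ε m k u.1 j ω'| := by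
      by_contra hcon
      push_neg at hcon
      have h1 := ciSup_le hcon
      have h2 := le_trans hω h1
      linarith
    obtain ⟨u, hu⟩ := hex
    obtain ⟨v, hvG, hvapx⟩ := hGapx u.1 (fun j => (abs_coord_le_norm2 u.1 j).trans u.2)
    have hd : norm2 (fun l => u.1 l - v l) ≤ Real.sqrt p * (2 * C₁ / k) :=
      norm2_le_coords (by positivity) hvapx
    have hdnn : 0 ≤ norm2 (fun l => u.1 l - v l) := norm2_nonneg _
    have hlip : ∀ j : Fin p,
        |rProc τ X ε m k u.1 j ω - ∫ ω', rProc τ X ε m k u.1 j ω'|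
          ≤ |rProc τ X ε m k v j ω - ∫ ω', rProc τ X ε m k v j ω'|
            + 2 * ((k:ℝ) * (2 * (Real.sqrt m)⁻¹ * C₀ ^ 2 * (Real.sqrt p * (2 * C₁ / k)))) := by
      intro j
      have h1 := rProc_lip hτ0 hτ1 hX ε m k u.1 v j ω
      have hiu : Integrable (rProc τ X ε m k u.1 j) ℙ :=
        integrable_of_abs_le (rProc_measurable τ X hmeas m k u.1 j).aestronglyMeasurable
          (fun ω'' => rProc_bound hτ0 hτ1 hX ε m k u.1 j ω'')
      have hiv : Integrable (rProc τ X ε m k v j) ℙ :=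
        integrable_of_abs_le (rProc_measurable τ X hmeas m k v j).aestronglyMeasurable
          (fun ω'' => rProc_bound hτ0 hτ1 hX ε m k v j ω'')
      have hint : |(∫ ω', rProc τ X ε m k u.1 j ω') - ∫ ω', rProc τ X ε m k v j ω'|
          ≤ (k:ℝ) * (2 * (Real.sqrt m)⁻¹ * C₀ ^ 2 * norm2 (fun l => u.1 l - v l)) := by
        rw [← integral_sub hiu hiv]
        exact abs_integral_le_of_abs_le
          (fun ω'' => rProc_lip hτ0 hτ1 hX ε m k u.1 v j ω'')
      have htri : |rProc τ X ε m k u.1 j ω - ∫ ω', rProc τ X ε m k u.1 j ω'|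
          ≤ |rProc τ X ε m k v j ω - ∫ ω', rProc τ X ε m k v j ω'|
            + (|rProc τ X ε m k u.1 j ω - rProc τ X ε m k v j ω|
              + |(∫ ω', rProc τ X ε m k u.1 j ω') - ∫ ω', rProc τ X ε m k v j ω'|) := by
        have heq : rProc τ X ε m k u.1 j ω - ∫ ω', rProc τ X ε m k u.1 j ω'
            = (rProc τ X ε m k v j ω - ∫ ω', rProc τ X ε m k v j ω')
              + ((rProc τ X ε m k u.1 j ω - rProc τ X ε m k v j ω)
                + -((∫ ω', rProc τ X ε m k u.1 j ω') - ∫ ω', rProc τ X ε m k v j ω')) := by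
          ring
        rw [heq]
        refine (abs_add_le _ _).trans ?_
        gcongr
        refine (abs_add_le _ _).trans ?_
        rw [abs_neg]
      refine htri.trans ?_
      gcongr
      have hcomb : |rProc τ X ε m k u.1 j ω - rProc τ X ε m k v j ω|
            + |(∫ ω', rProc τ X ε m k u.1 j ω') - ∫ ω', rProc τ X ε m k v j ω'|
          ≤ 2 * ((k:ℝ) * (2 * (Real.sqrt m)⁻¹ * C₀ ^ 2 * norm2 (fun l => u.1 l - v l))) := by
        linarith
      refine hcomb.trans ?_
      have : (k:ℝ) * (2 * (Real.sqrt m)⁻¹ * C₀ ^ 2 * norm2 (fun l => u.1 l - v l))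
          ≤ (k:ℝ) * (2 * (Real.sqrt m)⁻¹ * C₀ ^ 2 * (Real.sqrt p * (2 * C₁ / k))) := by
        gcongr
      linarith
    have hsum : ∑ j, |rProc τ X ε m k u.1 j ω - ∫ ω', rProc τ X ε m k u.1 j ω'|
        ≤ (∑ j, |rProc τ X ε m k v j ω - ∫ ω', rProc τ X ε m k v j ω'|)
          + (p:ℝ) * (2 * ((k:ℝ) * (2 * (Real.sqrt m)⁻¹ * C₀ ^ 2
            * (Real.sqrt p * (2 * C₁ / k))))) := by
      calc ∑ j, |rProc τ X ε m k u.1 j ω - ∫ ω', rProc τ X ε m k u.1 j ω'|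
          ≤ ∑ j : Fin p, (|rProc τ X ε m k v j ω - ∫ ω', rProc τ X ε m k v j ω'|
            + 2 * ((k:ℝ) * (2 * (Real.sqrt m)⁻¹ * C₀ ^ 2 * (Real.sqrt p * (2 * C₁ / k))))) :=
            Finset.sum_le_sum (fun j _ => hlip j)
        _ = _ := by
            rw [Finset.sum_add_distrib, Finset.sum_const, Finset.card_univ, Fintype.card_fin,
              nsmul_eq_mul]
    have hquarter : (p:ℝ) * (2 * ((k:ℝ) * (2 * (Real.sqrt m)⁻¹ * C₀ ^ 2
        * (Real.sqrt p * (2 * C₁ / k))))) ≤ T / 4 := by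
      have heq : (p:ℝ) * (2 * ((k:ℝ) * (2 * (Real.sqrt m)⁻¹ * C₀ ^ 2
          * (Real.sqrt p * (2 * C₁ / k)))))
          = (32 * Real.sqrt p * C₀ ^ 2 * C₁) * ((p:ℝ) * (Real.sqrt m)⁻¹ / 4) := by
        field_simp
        ring
      have hsqk := hK₁ k hkK₁
      rw [div_le_iff₀ (mul_pos (mul_pos hs2 hC₂) hC₃)] at hsqk
      have h32 : 32 * Real.sqrt p * C₀ ^ 2 * C₁
          ≤ Real.sqrt 2 * C₂ * C₃ * Real.sqrt k * Real.sqrt (Real.log k) := by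
        have hpos : 0 ≤ Real.sqrt 2 * C₂ * C₃ * Real.sqrt k :=
          le_of_lt (mul_pos (mul_pos (mul_pos hs2 hC₂) hC₃) hsk)
        calc 32 * Real.sqrt p * C₀ ^ 2 * C₁ ≤ Real.sqrt k * (Real.sqrt 2 * C₂ * C₃) := hsqk
          _ = (Real.sqrt 2 * C₂ * C₃ * Real.sqrt k) * 1 := by ring
          _ ≤ (Real.sqrt 2 * C₂ * C₃ * Real.sqrt k) * Real.sqrt (Real.log k) :=
            mul_le_mul_of_nonneg_left hslog hpos
          _ = Real.sqrt 2 * C₂ * C₃ * Real.sqrt k * Real.sqrt (Real.log k) := by ring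
      rw [heq, hT_def]
      calc (32 * Real.sqrt p * C₀ ^ 2 * C₁) * ((p:ℝ) * (Real.sqrt m)⁻¹ / 4)
          ≤ (Real.sqrt 2 * C₂ * C₃ * Real.sqrt k * Real.sqrt (Real.log k))
            * ((p:ℝ) * (Real.sqrt m)⁻¹ / 4) := by
            apply mul_le_mul_of_nonneg_right h32 (by positivity)
        _ = Real.sqrt 2 * C₂ * C₃ * p * (Real.sqrt m)⁻¹ * Real.sqrt k
            * Real.sqrt (Real.log k) / 4 := by ring
    have hFv : T / 2 ≤ ∑ j, |rProc τ X ε m k v j ω - ∫ ω', rProc τ X ε m k v j ω'| := by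
      linarith
    have hexj : ∃ j : Fin p, t ≤ |rProc τ X ε m k v j ω - ∫ ω', rProc τ X ε m k v j ω'| := by
      by_contra hcon
      push_neg at hcon
      have h1 : ∑ j, |rProc τ X ε m k v j ω - ∫ ω', rProc τ X ε m k v j ω'|
          < ∑ _j : Fin p, t :=
        Finset.sum_lt_sum_of_nonempty Finset.univ_nonempty (fun j _ => hcon j)
      have h2 : ∑ _j : Fin p, t = (p:ℝ) * t := by
        rw [Finset.sum_const, Finset.card_univ, Fintype.card_fin, nsmul_eq_mul]
      have h3 : (p:ℝ) * t = T / 2 := by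
        rw [ht_def]
        field_simp
      linarith
    obtain ⟨j, hj⟩ := hexj
    exact Set.mem_biUnion hvG (Set.mem_iUnion.2 ⟨j, hj⟩)
  refine le_trans (measure_mono hincl) ?_
  -- square identities
  have s2 : Real.sqrt 2 ^ 2 = 2 := Real.sq_sqrt (by norm_num)
  have sk2 : Real.sqrt k ^ 2 = (k:ℝ) := Real.sq_sqrt hkR.le
  have sl2 : Real.sqrt (Real.log k) ^ 2 = Real.log k := Real.sq_sqrt (by linarith)
  have sm2 : Real.sqrt m ^ 2 = (m:ℝ) := Real.sq_sqrt hmR.le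
  have sp2 : Real.sqrt p ^ 2 = (p:ℝ) := Real.sq_sqrt hp'.le
  have hteq : t = Real.sqrt 2 * C₂ * C₃ * (Real.sqrt m)⁻¹ * Real.sqrt k
      * Real.sqrt (Real.log k) / 2 := by
    rw [ht_def, hT_def]
    field_simp
  have hpoint : ∀ v ∈ G, ∀ j : Fin p,
      ℙ {ω | t ≤ |rProc τ X ε m k v j ω - ∫ ω', rProc τ X ε m k v j ω'|}
        ≤ ENNReal.ofReal (2 * (k:ℝ) ^ (-E)) := by
    intro v hvG j
    have hvB : norm2 v ≤ B := by
      rw [hB_def]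
      exact norm2_le_coords hC₁.le (hGmem v hvG)
    have htb : t ≤ 2 * k * (4 * (Real.sqrt m)⁻¹ * C₀ ^ 2 * B) := by
      have hlogle : Real.sqrt (Real.log k) ≤ Real.sqrt 2 * Real.sqrt (Real.sqrt k) := by
        rw [← Real.sqrt_mul (by norm_num : (0:ℝ) ≤ 2)]
        exact Real.sqrt_le_sqrt (log_nat_le_two_sqrt hk1)
      have hK2' : 2 * C₂ * C₃ ≤ 16 * C₀ ^ 2 * C₁ * Real.sqrt p * Real.sqrt (Real.sqrt k) := by
        have h := hK₂ k hkK₂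
        rw [div_le_iff₀ (by positivity)] at h
        calc 2 * C₂ * C₃ ≤ Real.sqrt (Real.sqrt k) * (16 * C₀ ^ 2 * C₁ * Real.sqrt p) := h
          _ = 16 * C₀ ^ 2 * C₁ * Real.sqrt p * Real.sqrt (Real.sqrt k) := by ring
      have hssk : Real.sqrt (Real.sqrt k) ^ 2 = Real.sqrt k := Real.sq_sqrt hsk.le
      have hkey : Real.sqrt 2 * C₂ * C₃ * Real.sqrt k * Real.sqrt (Real.log k)
          ≤ 16 * C₀ ^ 2 * C₁ * Real.sqrt p * k := by
        calc Real.sqrt 2 * C₂ * C₃ * Real.sqrt k * Real.sqrt (Real.log k)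
            ≤ Real.sqrt 2 * C₂ * C₃ * Real.sqrt k * (Real.sqrt 2 * Real.sqrt (Real.sqrt k)) := by
              apply mul_le_mul_of_nonneg_left hlogle
                (le_of_lt (mul_pos (mul_pos (mul_pos hs2 hC₂) hC₃) hsk))
          _ = (Real.sqrt 2 ^ 2) * (C₂ * C₃) * Real.sqrt k * Real.sqrt (Real.sqrt k) := by ring
          _ = (2 * C₂ * C₃) * (Real.sqrt k * Real.sqrt (Real.sqrt k)) := by rw [s2]; ring
          _ ≤ (16 * C₀ ^ 2 * C₁ * Real.sqrt p * Real.sqrt (Real.sqrt k))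
              * (Real.sqrt k * Real.sqrt (Real.sqrt k)) := by
              apply mul_le_mul_of_nonneg_right hK2' (by positivity)
          _ = 16 * C₀ ^ 2 * C₁ * Real.sqrt p * (Real.sqrt k * (Real.sqrt (Real.sqrt k) ^ 2)) := by
              ring
          _ = 16 * C₀ ^ 2 * C₁ * Real.sqrt p * (Real.sqrt k * Real.sqrt k) := by rw [hssk]
          _ = 16 * C₀ ^ 2 * C₁ * Real.sqrt p * (Real.sqrt k ^ 2) := by ring
          _ = 16 * C₀ ^ 2 * C₁ * Real.sqrt p * k := by rw [sk2]
      rw [hteq, hB_def]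
      rw [div_le_iff₀ (by norm_num : (0:ℝ) < 2)]
      calc Real.sqrt 2 * C₂ * C₃ * (Real.sqrt m)⁻¹ * Real.sqrt k * Real.sqrt (Real.log k)
          = (Real.sqrt 2 * C₂ * C₃ * Real.sqrt k * Real.sqrt (Real.log k)) * (Real.sqrt m)⁻¹ := by
            ring
        _ ≤ (16 * C₀ ^ 2 * C₁ * Real.sqrt p * k) * (Real.sqrt m)⁻¹ := by
            apply mul_le_mul_of_nonneg_right hkey (by positivity)
        _ = 2 * k * (4 * (Real.sqrt m)⁻¹ * C₀ ^ 2 * (Real.sqrt p * C₁)) * 2 := by ring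
    have hpb := point_bound hτ0 hτ1 hC₀ hX hmeas hindep hm1 k v j hB hvB ht0 htb
    refine le_trans hpb (ENNReal.ofReal_le_ofReal ?_)
    have ht2 : t ^ 2 = C₂ ^ 2 * C₃ ^ 2 * (m:ℝ)⁻¹ * k * Real.log k / 2 := by
      have h : t ^ 2 = (Real.sqrt 2 ^ 2) * C₂ ^ 2 * C₃ ^ 2 * ((Real.sqrt m)⁻¹ ^ 2)
          * (Real.sqrt k ^ 2) * (Real.sqrt (Real.log k) ^ 2) / 4 := by
        rw [hteq]; ring
      rw [h, s2, sk2, sl2, inv_pow, sm2]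
      ring
    have hden : 4 * (k:ℝ) * (4 * (Real.sqrt m)⁻¹ * C₀ ^ 2 * B) ^ 2
        = 64 * k * (m:ℝ)⁻¹ * C₀ ^ 4 * ((p:ℝ) * C₁ ^ 2) := by
      have h : 4 * (k:ℝ) * (4 * (Real.sqrt m)⁻¹ * C₀ ^ 2 * B) ^ 2
          = 64 * k * ((Real.sqrt m)⁻¹ ^ 2) * C₀ ^ 4 * ((Real.sqrt p ^ 2) * C₁ ^ 2) := by
        rw [hB_def]; ring
      rw [h, inv_pow, sm2, sp2]
    have hexp : -t ^ 2 / (4 * (k:ℝ) * (4 * (Real.sqrt m)⁻¹ * C₀ ^ 2 * B) ^ 2)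
        = -(E * Real.log k) := by
      have hnum : C₂ ^ 2 * C₃ ^ 2 * (m:ℝ)⁻¹ * k * Real.log k / 2
          / (64 * k * (m:ℝ)⁻¹ * C₀ ^ 4 * ((p:ℝ) * C₁ ^ 2)) = E * Real.log k := by
        rw [hC₃sq]
        field_simp
        ring
      rw [ht2, hden, neg_div, hnum]
    rw [hexp]
    have hrpow : (k:ℝ) ^ (-E) = Real.exp (-(E * Real.log k)) := by
      rw [Real.rpow_def_of_pos hkR]
      congr 1
      ring
    rw [hrpow]
  -- sum up
  calc ℙ (⋃ v ∈ G, ⋃ j : Fin p,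
        {ω | t ≤ |rProc τ X ε m k v j ω - ∫ ω', rProc τ X ε m k v j ω'|})
      ≤ ∑ v ∈ G, ℙ (⋃ j : Fin p,
        {ω | t ≤ |rProc τ X ε m k v j ω - ∫ ω', rProc τ X ε m k v j ω'|}) :=
        measure_biUnion_finset_le G _
    _ ≤ ∑ v ∈ G, ∑ j : Fin p,
        ℙ {ω | t ≤ |rProc τ X ε m k v j ω - ∫ ω', rProc τ X ε m k v j ω'|} :=
        Finset.sum_le_sum (fun v _ => measure_iUnion_fintype_le _ _)
    _ ≤ ∑ v ∈ G, ∑ _j : Fin p, ENNReal.ofReal (2 * (k:ℝ) ^ (-E)) :=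
        Finset.sum_le_sum (fun v hv => Finset.sum_le_sum (fun j _ => hpoint v hv j))
    _ = (G.card : ENNReal) * ((p : ENNReal) * ENNReal.ofReal (2 * (k:ℝ) ^ (-E))) := by
        rw [Finset.sum_const, Finset.sum_const, Finset.card_univ, Fintype.card_fin,
          nsmul_eq_mul, nsmul_eq_mul]
    _ ≤ ENNReal.ofReal (2 * (k:ℝ) ^ (-(C₂ ^ 2))) := by
        rw [show ((G.card : ENNReal)) = ENNReal.ofReal (G.card : ℝ) by
            rw [ENNReal.ofReal_natCast],
          show ((p : ENNReal)) = ENNReal.ofReal (p : ℝ) by rw [ENNReal.ofReal_natCast],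
          ← ENNReal.ofReal_mul (by positivity), ← ENNReal.ofReal_mul (by positivity)]
        apply ENNReal.ofReal_le_ofReal
        -- real arithmetic
        have hcount : ((G.card : ℝ)) * p ≤ (k:ℝ) ^ (2 * p + 2) := by
          have h1 : G.card * p ≤ (k + 1) ^ p * p := Nat.mul_le_mul_right p hGcard
          have h2 : G.card * p ≤ k ^ (2 * p + 2) := le_trans h1 (gridCount_le hp hk2 hkp)
          calc ((G.card : ℝ)) * p = ((G.card * p : ℕ) : ℝ) := by push_cast; ring
            _ ≤ ((k ^ (2 * p + 2) : ℕ) : ℝ) := by exact_mod_cast h2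
            _ = (k:ℝ) ^ (2 * p + 2) := by push_cast; ring
        have hsplit : (k:ℝ) ^ (-E) = (k:ℝ) ^ (-(C₂ ^ 2)) * ((k:ℝ) ^ (2 * p + 2 : ℕ))⁻¹ := by
          rw [hE_def]
          rw [show -(C₂ ^ 2 + 2 * (p:ℝ) + 2) = -(C₂ ^ 2) + -(2 * (p:ℝ) + 2) by ring,
            Real.rpow_add hkR]
          congr 1
          rw [show -(2 * (p:ℝ) + 2) = -((2 * p + 2 : ℕ) : ℝ) by push_cast; ring,
            Real.rpow_neg hkR.le, Real.rpow_natCast]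
        have hpowpos : (0:ℝ) < (k:ℝ) ^ (2 * p + 2 : ℕ) := by positivity
        have hfrac : ((G.card : ℝ)) * p * ((k:ℝ) ^ (2 * p + 2 : ℕ))⁻¹ ≤ 1 := by
          rw [← div_eq_mul_inv, div_le_one hpowpos]
          exact hcount
        have hrpos : (0:ℝ) ≤ (k:ℝ) ^ (-(C₂ ^ 2)) := Real.rpow_nonneg hkR.le _
        calc (G.card : ℝ) * ((p:ℝ) * (2 * (k:ℝ) ^ (-E)))
            = (2 * (k:ℝ) ^ (-(C₂ ^ 2)))
              * ((G.card : ℝ) * p * ((k:ℝ) ^ (2 * p + 2 : ℕ))⁻¹) := by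
              rw [hsplit]; ring
          _ ≤ (2 * (k:ℝ) ^ (-(C₂ ^ 2))) * 1 := by
              apply mul_le_mul_of_nonneg_left hfrac (by positivity)
          _ = 2 * (k:ℝ) ^ (-(C₂ ^ 2)) := by ring
end

section
/- (Karush–Kuhn–Tucker conditions for the adaptive LASSO expectile estimator.) Fix an expectile index τ ∈ (0,1), integers m, p ≥ 1, reals Y₁,…,Y_m, vectors X₁,…,X_m ∈ ℝ^p with coordinates X_{ij}, a constant λ > 0 and weights w₁,…,w_p > 0. If β̂ ∈ ℝ^p minimizes the function β ↦ Σ_{i=1}^m ρ_τ(Y_i − X_iᵀβ) + m·λ·Σ_{j=1}^p w_j·|β_j| over ℝ^p, then: (i) for every j with β̂_j ≠ 0, Σ_{i=1}^m g_τ(Y_i − X_iᵀβ̂)·X_{ij} = m·λ·w_j·sgn(β̂_j); and (ii) for every j with β̂_j = 0, |Σ_{i=1}^m g_τ(Y_i − X_iᵀβ̂)·X_{ij}| ≤ m·λ·w_j. -/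
/-- Expectile loss `ρ_τ(x) = |τ − 1_{x<0}| x²`. -/
noncomputable def expLoss (τ x : ℝ) : ℝ := |τ - (if x < 0 then 1 else 0)| * x ^ 2

/-- The sign function: `x/|x|` for `x ≠ 0` and `0` at `0`. -/
noncomputable def sgn (x : ℝ) : ℝ := if x = 0 then 0 else x / |x|

lemma hasDerivAt_expLoss (τ : ℝ) (hτ : τ ∈ Set.Ioo (0 : ℝ) 1) (x : ℝ) :
    HasDerivAt (expLoss τ) (gFun τ x) x := by
  obtain ⟨h0, h1⟩ := hτ
  rcases lt_trichotomy x 0 with hx | hx | hx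
  · have h : HasDerivAt (fun y : ℝ => (1 - τ) * y ^ 2) (2 * (1 - τ) * x) x := by
      have := (hasDerivAt_pow 2 x).const_mul (1 - τ)
      simpa [mul_comm, mul_assoc, mul_left_comm] using this
    have heq : (fun y : ℝ => (1 - τ) * y ^ 2) =ᶠ[nhds x] expLoss τ := by
      filter_upwards [Iio_mem_nhds hx] with y hy
      simp only [expLoss, Set.mem_Iio] at *
      rw [if_pos hy, abs_of_nonpos (by linarith)]
      ring
    have := h.congr_of_eventuallyEq heq.symm
    simpa [gFun, not_le.mpr hx] using this
  · subst hx
    rw [hasDerivAt_iff_tendsto_slope]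
    have hb : ∀ y : ℝ, y ≠ 0 → ‖slope (expLoss τ) 0 y‖ ≤ |y| := by
      intro y hy
      rw [slope_def_field]
      have h2 : |τ - (if y < 0 then 1 else 0)| ≤ 1 := by
        split <;> rw [abs_le] <;> constructor <;> linarith
      have : expLoss τ 0 = 0 := by simp [expLoss]
      rw [this, sub_zero, sub_zero]
      rw [norm_div, Real.norm_eq_abs, Real.norm_eq_abs]
      rw [div_le_iff₀ (abs_pos.mpr hy)]
      have : |expLoss τ y| ≤ y ^ 2 := by
        rw [expLoss, abs_mul, abs_abs]
        calc |τ - (if y < 0 then 1 else 0)| * |y ^ 2| ≤ 1 * |y ^ 2| := by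
              apply mul_le_mul_of_nonneg_right h2 (abs_nonneg _)
          _ = y ^ 2 := by rw [one_mul, abs_of_nonneg (sq_nonneg y)]
      calc |expLoss τ y| ≤ y ^ 2 := this
        _ = |y| * |y| := by rw [← abs_mul, sq, abs_of_nonneg (mul_self_nonneg y)]
    have hg : Filter.Tendsto (fun y : ℝ => |y|) (nhdsWithin 0 {(0:ℝ)}ᶜ) (nhds 0) := by
      have : Filter.Tendsto (fun y : ℝ => |y|) (nhds 0) (nhds |0|) :=
        continuous_abs.tendsto 0
      simpa using this.mono_left nhdsWithin_le_nhds
    have hev : ∀ᶠ y in nhdsWithin 0 {(0:ℝ)}ᶜ, ‖slope (expLoss τ) 0 y‖ ≤ |y| := by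
      filter_upwards [self_mem_nhdsWithin] with y hy
      exact hb y hy
    have : gFun τ 0 = 0 := by simp [gFun]
    rw [this]
    exact squeeze_zero_norm' hev hg
  · have h : HasDerivAt (fun y : ℝ => τ * y ^ 2) (2 * τ * x) x := by
      have := (hasDerivAt_pow 2 x).const_mul τ
      simpa [mul_comm, mul_assoc, mul_left_comm] using this
    have heq : (fun y : ℝ => τ * y ^ 2) =ᶠ[nhds x] expLoss τ := by
      filter_upwards [Ioi_mem_nhds hx] with y hy
      simp only [expLoss, Set.mem_Ioi] at *
      rw [if_neg (not_lt.mpr hy.le), sub_zero, abs_of_pos h0]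
    have := h.congr_of_eventuallyEq heq.symm
    simpa [gFun, hx.le] using this

lemma kkt_one (τ : ℝ) (hτ : τ ∈ Set.Ioo (0 : ℝ) 1) (m : ℕ) (r a : Fin m → ℝ) (c b : ℝ)
    (hineq : ∀ t : ℝ, (∑ i, expLoss τ (r i)) + c * |b| ≤
      (∑ i, expLoss τ (r i - t * a i)) + c * |b + t|) :
    (b ≠ 0 → ∑ i, gFun τ (r i) * a i = c * sgn b) ∧
    (b = 0 → |∑ i, gFun τ (r i) * a i| ≤ c) := by
  set G := ∑ i, gFun τ (r i) * a i with hG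
  set S : ℝ → ℝ := fun t => ∑ i, expLoss τ (r i - t * a i) with hSdef
  have hS0 : S 0 = ∑ i, expLoss τ (r i) := by simp [hSdef]
  have hSd : HasDerivAt S (-G) 0 := by
    have h1 : HasDerivAt S (∑ i, gFun τ (r i) * (-a i)) 0 := by
      apply HasDerivAt.fun_sum
      intro i _
      have hin : HasDerivAt (fun t : ℝ => r i - t * a i) (-a i) 0 := by
        simpa using ((hasDerivAt_id (0:ℝ)).mul_const (a i)).const_sub (r i)
      have h2 := (hasDerivAt_expLoss τ hτ (r i - 0 * a i)).comp 0 hin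
      simpa [Function.comp_def] using h2
    have : (∑ i, gFun τ (r i) * (-a i)) = -G := by
      simp [hG, mul_neg, Finset.sum_neg_distrib]
    rwa [this] at h1
  have hT : Filter.Tendsto (slope S 0) (nhdsWithin 0 {(0:ℝ)}ᶜ) (nhds (-G)) :=
    hasDerivAt_iff_tendsto_slope.mp hSd
  have hpos : Filter.Tendsto (slope S 0) (nhdsWithin 0 (Set.Ioi 0)) (nhds (-G)) :=
    hT.mono_left (nhdsWithin_mono 0 (fun x hx => ne_of_gt hx))
  have hneg : Filter.Tendsto (slope S 0) (nhdsWithin 0 (Set.Iio 0)) (nhds (-G)) :=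
    hT.mono_left (nhdsWithin_mono 0 (fun x hx => ne_of_lt hx))
  have hslope : ∀ t : ℝ, t ≠ 0 → slope S 0 t = (S t - S 0) / t := by
    intro t ht; rw [slope_def_field, sub_zero]
  constructor
  · intro hb
    set s : ℝ := sgn b with hs
    have habs : ∀ t : ℝ, |t| < |b| → |b + t| = |b| + t * s := by
      intro t ht
      rcases lt_or_gt_of_ne hb with h | h
      · have h1 : b + t < 0 := by
          have := abs_lt.mp ht
          rw [abs_of_neg h] at this
          linarith [this.2]
        have hs1 : s = -1 := by
          rw [hs, sgn, if_neg hb, abs_of_neg h, div_neg, div_self (ne_of_lt h)]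
        rw [abs_of_neg h1, abs_of_neg h, hs1]; ring
      · have h1 : 0 < b + t := by
          have := abs_lt.mp ht
          rw [abs_of_pos h] at this; linarith [this.1]
        have hs1 : s = 1 := by
          rw [hs, sgn, if_neg hb, abs_of_pos h, div_self (ne_of_gt h)]
        rw [abs_of_pos h1, abs_of_pos h, hs1]; ring
    have hkey : ∀ t : ℝ, |t| < |b| → -(c * s) * t ≤ S t - S 0 := by
      intro t ht
      have h1 : S 0 + c * |b| ≤ S t + c * |b + t| := by rw [hS0]; exact hineq t
      rw [habs t ht] at h1
      nlinarith
    have hbpos : 0 < |b| := abs_pos.mpr hb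
    have hev : ∀ᶠ t in nhds (0:ℝ), |t| < |b| := by
      have := eventually_abs_sub_lt (0:ℝ) hbpos
      simpa using this
    have h2 : -(c * s) ≤ -G := by
      apply ge_of_tendsto hpos
      filter_upwards [self_mem_nhdsWithin, eventually_nhdsWithin_of_eventually_nhds hev]
        with t ht hlt
      rw [hslope t (ne_of_gt ht), le_div_iff₀ ht]
      exact hkey t hlt
    have h3 : -G ≤ -(c * s) := by
      apply le_of_tendsto hneg
      filter_upwards [self_mem_nhdsWithin, eventually_nhdsWithin_of_eventually_nhds hev]
        with t ht hlt
      rw [hslope t (ne_of_lt ht), div_le_iff_of_neg ht]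
      have := hkey t hlt
      nlinarith
    have : G = c * s := by linarith
    exact this
  · intro hb
    subst hb
    have hkey : ∀ t : ℝ, 0 ≤ t → -c * t ≤ S t - S 0 := by
      intro t h
      have h1 : S 0 + c * |(0:ℝ)| ≤ S t + c * |0 + t| := by rw [hS0]; exact hineq t
      simp only [abs_zero, zero_add] at h1
      rw [abs_of_nonneg h] at h1; nlinarith
    have h2 : -c ≤ -G := by
      apply ge_of_tendsto hpos
      filter_upwards [self_mem_nhdsWithin] with t ht
      rw [hslope t (ne_of_gt ht), le_div_iff₀ ht]
      exact hkey t (le_of_lt ht)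
    have hkey2 : ∀ t : ℝ, t < 0 → c * t ≤ S t - S 0 := by
      intro t ht
      have h1 : S 0 + c * |(0:ℝ)| ≤ S t + c * |0 + t| := by rw [hS0]; exact hineq t
      simp only [abs_zero, zero_add] at h1
      rw [abs_of_neg ht] at h1; nlinarith
    have h3 : -G ≤ c := by
      apply le_of_tendsto hneg
      filter_upwards [self_mem_nhdsWithin] with t ht
      rw [hslope t (ne_of_lt ht), div_le_iff_of_neg ht]
      exact hkey2 t ht
    rw [abs_le]; constructor <;> linarith

theorem stmt11 (τ : ℝ) (hτ : τ ∈ Set.Ioo (0 : ℝ) 1) (m p : ℕ) (hm : 1 ≤ m) (hp : 1 ≤ p)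
    (Y : Fin m → ℝ) (X : Fin m → Fin p → ℝ)
    (lam : ℝ) (hlam : 0 < lam) (w : Fin p → ℝ) (hw : ∀ j, 0 < w j)
    (βhat : Fin p → ℝ)
    (hmin : IsMinOn (fun β : Fin p → ℝ =>
        (∑ i, expLoss τ (Y i - dotp (X i) β)) + m * lam * ∑ j, w j * |β j|)
      Set.univ βhat) :
    (∀ j, βhat j ≠ 0 →
      ∑ i, gFun τ (Y i - dotp (X i) βhat) * X i j = m * lam * w j * sgn (βhat j)) ∧
    (∀ j, βhat j = 0 →
      |∑ i, gFun τ (Y i - dotp (X i) βhat) * X i j| ≤ m * lam * w j) := by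
  have main : ∀ j : Fin p,
      (βhat j ≠ 0 → ∑ i, gFun τ (Y i - dotp (X i) βhat) * X i j
          = (m * lam * w j) * sgn (βhat j)) ∧
      (βhat j = 0 → |∑ i, gFun τ (Y i - dotp (X i) βhat) * X i j| ≤ m * lam * w j) := by
    intro j
    set r : Fin m → ℝ := fun i => Y i - dotp (X i) βhat with hr
    set a : Fin m → ℝ := fun i => X i j with ha
    have hupd : ∀ (f : Fin p → ℝ) (v : ℝ),
        ∑ k, f k * Function.update βhat j v k
          = (∑ k, f k * βhat k) + f j * (v - βhat j) := by
      intro f v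
      have step : ∀ k, f k * Function.update βhat j v k
          = f k * βhat k + (if k = j then f k * (v - βhat j) else 0) := by
        intro k
        rcases eq_or_ne k j with h | h
        · subst h; simp [Function.update_self]; ring
        · simp [Function.update_of_ne h, h]
      rw [Finset.sum_congr rfl (fun k _ => step k), Finset.sum_add_distrib]
      congr 1
      simp
    have hwupd : ∀ v : ℝ,
        ∑ k, w k * |Function.update βhat j v k|
          = (∑ k, w k * |βhat k|) + (w j * |v| - w j * |βhat j|) := by
      intro v
      have step : ∀ k, w k * |Function.update βhat j v k|
          = w k * |βhat k| + (if k = j then w k * |v| - w k * |βhat k| else 0) := by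
        intro k
        rcases eq_or_ne k j with h | h
        · subst h; simp [Function.update_self]
        · simp [Function.update_of_ne h, h]
      rw [Finset.sum_congr rfl (fun k _ => step k), Finset.sum_add_distrib]
      congr 1
      simp
    have hineq : ∀ t : ℝ, (∑ i, expLoss τ (r i)) + (m * lam * w j) * |βhat j| ≤
        (∑ i, expLoss τ (r i - t * a i)) + (m * lam * w j) * |βhat j + t| := by
      intro t
      have h0 := hmin (Set.mem_univ (Function.update βhat j (βhat j + t)))
      simp only [Set.mem_setOf_eq] at h0
      have hdot : ∀ i, Y i - dotp (X i) (Function.update βhat j (βhat j + t))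
          = r i - t * a i := by
        intro i
        rw [dotp, hupd (X i) (βhat j + t)]
        simp [hr, ha, dotp]
        ring
      have hwsum : ∑ k, w k * |Function.update βhat j (βhat j + t) k|
          = (∑ k, w k * |βhat k|) + (w j * |βhat j + t| - w j * |βhat j|) :=
        hwupd (βhat j + t)
      have hsum : ∑ i, expLoss τ (Y i - dotp (X i) (Function.update βhat j (βhat j + t)))
          = ∑ i, expLoss τ (r i - t * a i) :=
        Finset.sum_congr rfl (fun i _ => by rw [hdot i])
      rw [hsum, hwsum] at h0
      have hrw : (∑ i, expLoss τ (Y i - dotp (X i) βhat)) = ∑ i, expLoss τ (r i) := rfl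
      rw [hrw] at h0
      nlinarith [h0]
    exact kkt_one τ hτ m r a (m * lam * w j) (βhat j) hineq
  exact ⟨fun j hj => (main j).1 hj, fun j hj => (main j).2 hj⟩
end
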